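/- (Pairing Lemma) Let D be an N×N matrix over ZMod 2, V an invertible upper-triangular N×N matrix over ZMod 2, and suppose R = D·V is reduced. Write r_D(a,b) for the rank of D[≥a,≤b], with the conventions r_D(N+1,b) = 0 and r_D(a,0) = 0. Then for all 1 ≤ i, j ≤ N, the pair (i,j) is a pivot pair of R if and only if r_D(i,j) − r_D(i+1,j) + r_D(i+1,j−1) − r_D(i,j−1) = 1. -/

import Mathlib

open Matrix


/-- `i` is the pivot of column `j` of `M`: the largest row index with a nonzero entry.
(Row/column `p : Fin N` corresponds to index `p+1 ∈ {1,…,N}` of the paper.) -/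
def IsLow {N : ℕ} (M : Matrix (Fin N) (Fin N) (ZMod 2)) (i j : Fin N) : Prop :=
  M i j ≠ 0 ∧ ∀ i' : Fin N, M i' j ≠ 0 → i' ≤ i

/-- A matrix is reduced if its nonzero columns have pairwise distinct pivots. -/
def IsReducedMat {N : ℕ} (M : Matrix (Fin N) (Fin N) (ZMod 2)) : Prop :=
  ∀ i j j' : Fin N, IsLow M i j → IsLow M i j' → j = j'

/-- `rankLL M a b` is the rank of the lower-left submatrix `M[≥ a, ≤ b]` formed by the
rows with (1-based) index `≥ a` and the columns with (1-based) index `≤ b`. -/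
noncomputable def rankLL {N : ℕ} (M : Matrix (Fin N) (Fin N) (ZMod 2)) (a b : ℕ) : ℕ :=
  (Matrix.of fun (p : {p : Fin N // a ≤ (p : ℕ) + 1}) (q : {q : Fin N // (q : ℕ) + 1 ≤ b}) =>
    M p.1 q.1).rank

/-- `V` is upper-triangular. -/
def UpperTri {N : ℕ} (V : Matrix (Fin N) (Fin N) (ZMod 2)) : Prop :=
  ∀ a b : Fin N, b < a → V a b = 0

/-- A family of vectors with distinct pivots is linearly independent. -/
lemma linearIndependent_of_pivots {K : Type*} [Field K] {ι P : Type*} [LinearOrder P]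
    (v : ι → P → K) (piv : ι → P)
    (hne : ∀ i, v i (piv i) ≠ 0) (hzero : ∀ i p, piv i < p → v i p = 0)
    (hinj : Function.Injective piv) : LinearIndependent K v := by
  classical
  rw [linearIndependent_iff']
  intro s g hsum i hi
  by_contra hgi
  have hne' : (s.filter fun k => g k ≠ 0).Nonempty := ⟨i, Finset.mem_filter.mpr ⟨hi, hgi⟩⟩
  obtain ⟨m, hm, hmax⟩ := Finset.exists_max_image _ piv hne'
  obtain ⟨hms, hgm⟩ := Finset.mem_filter.mp hm
  have h0 : ∑ k ∈ s, g k * v k (piv m) = 0 := by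
    simpa using congrFun hsum (piv m)
  rw [Finset.sum_eq_single m (fun k hk hkm => ?_) (fun h => absurd hms h)] at h0
  · rcases mul_eq_zero.mp h0 with h | h
    · exact hgm h
    · exact hne m h
  · by_cases hgk : g k = 0
    · rw [hgk, zero_mul]
    · have hk' : piv k ≤ piv m := hmax k (Finset.mem_filter.mpr ⟨hk, hgk⟩)
      have hk'' : piv k < piv m := lt_of_le_of_ne hk' (fun h => hkm (hinj h))
      rw [hzero k (piv m) hk'', mul_zero]

/-- The rank of a matrix whose nonzero columns have distinct pivots is the number of
its nonzero columns. -/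
lemma rank_eq_card_pivots {K : Type*} [Field K] {P Q : Type*} [Fintype P] [Fintype Q]
    [LinearOrder P] (A : Matrix P Q K) [DecidablePred fun q : Q => ∃ p, A p q ≠ 0]
    (hd : ∀ p q q', (A p q ≠ 0 ∧ ∀ p', A p' q ≠ 0 → p' ≤ p) →
          (A p q' ≠ 0 ∧ ∀ p', A p' q' ≠ 0 → p' ≤ p) → q = q') :
    A.rank = (Finset.univ.filter fun q => ∃ p, A p q ≠ 0).card := by
  classical
  set T := Finset.univ.filter fun q : Q => ∃ p, A p q ≠ 0 with hT
  have hex : ∀ q : {q // q ∈ T}, ∃ p, A p q.1 ≠ 0 ∧ ∀ p', A p' q.1 ≠ 0 → p' ≤ p := by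
    rintro ⟨q, hq⟩
    obtain ⟨p0, hp0⟩ := (Finset.mem_filter.mp hq).2
    set s : Finset P := Finset.univ.filter fun p => A p q ≠ 0 with hsdef
    have hmem : ∀ p : P, p ∈ s ↔ A p q ≠ 0 := by intro p; simp [hsdef]
    have hs : s.Nonempty := ⟨p0, (hmem p0).mpr hp0⟩
    exact ⟨s.max' hs, (hmem _).mp (s.max'_mem hs),
      fun p' hp' => s.le_max' p' ((hmem p').mpr hp')⟩
  choose piv hpiv1 hpiv2 using hex
  set v : {q // q ∈ T} → P → K := fun q p => A p q.1 with hv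
  have hli : LinearIndependent K v := by
    refine linearIndependent_of_pivots v piv hpiv1 (fun q p hp => ?_) (fun q q' h => ?_)
    · by_contra h
      exact absurd (hpiv2 q p h) (not_le.mpr hp)
    · exact Subtype.ext (hd (piv q) q.1 q'.1 ⟨hpiv1 q, hpiv2 q⟩
        (by rw [h]; exact ⟨hpiv1 q', hpiv2 q'⟩))
  have hspan : Submodule.span K (Set.range Aᵀ) = Submodule.span K (Set.range v) := by
    apply le_antisymm
    · rw [Submodule.span_le]
      rintro _ ⟨q, rfl⟩
      by_cases hq : q ∈ T
      · exact Submodule.subset_span ⟨⟨q, hq⟩, rfl⟩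
      · have h0 : Aᵀ q = 0 := by
          funext p
          by_contra h
          exact hq (Finset.mem_filter.mpr ⟨Finset.mem_univ q, ⟨p, h⟩⟩)
        rw [h0]
        exact Submodule.zero_mem _
    · rw [Submodule.span_le]
      rintro _ ⟨q, rfl⟩
      exact Submodule.subset_span ⟨q.1, rfl⟩
  rw [Matrix.rank_eq_finrank_span_cols, show A.col = Aᵀ from rfl, hspan, finrank_span_eq_card hli, Fintype.card_coe]

/-- Every nonzero column has a pivot. -/
lemma exists_isLow {N : ℕ} (R : Matrix (Fin N) (Fin N) (ZMod 2)) {p0 q : Fin N}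
    (h : R p0 q ≠ 0) : ∃ p, p0 ≤ p ∧ IsLow R p q := by
  classical
  set s : Finset (Fin N) := Finset.univ.filter fun p => R p q ≠ 0 with hsdef
  have hmem : ∀ p : Fin N, p ∈ s ↔ R p q ≠ 0 := by intro p; simp [hsdef]
  have hs : s.Nonempty := ⟨p0, (hmem p0).mpr h⟩
  exact ⟨s.max' hs, s.le_max' p0 ((hmem p0).mpr h), (hmem _).mp (s.max'_mem hs),
    fun p' hp' => s.le_max' p' ((hmem p').mpr hp')⟩

lemma isLow_unique {N : ℕ} {R : Matrix (Fin N) (Fin N) (ZMod 2)} {p p' q : Fin N}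
    (h : IsLow R p q) (h' : IsLow R p' q) : p = p' :=
  le_antisymm (h'.2 p h.1) (h.2 p' h'.1)

open scoped Classical in
/-- The rank of the lower-left submatrix of a reduced matrix is the number of pivot
pairs in that region. -/
lemma rankLL_eq_card {N : ℕ} (R : Matrix (Fin N) (Fin N) (ZMod 2)) (hR : IsReducedMat R)
    (a b : ℕ) :
    rankLL R a b
      = (Finset.univ.filter fun q : Fin N =>
          (q : ℕ) + 1 ≤ b ∧ ∃ p : Fin N, a ≤ (p : ℕ) + 1 ∧ IsLow R p q).card := by
  classical
  set A : Matrix {p : Fin N // a ≤ (p : ℕ) + 1} {q : Fin N // (q : ℕ) + 1 ≤ b} (ZMod 2) :=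
    Matrix.of fun p q => R p.1 q.1 with hA
  have key : ∀ (p : {p : Fin N // a ≤ (p : ℕ) + 1}) (q : {q : Fin N // (q : ℕ) + 1 ≤ b}),
      (A p q ≠ 0 ∧ ∀ p', A p' q ≠ 0 → p' ≤ p) ↔ IsLow R p.1 q.1 := by
    intro p q
    constructor
    · rintro ⟨h1, h2⟩
      refine ⟨h1, fun p' hp' => ?_⟩
      by_cases hp'a : a ≤ (p' : ℕ) + 1
      · exact Subtype.coe_le_coe.mpr (h2 ⟨p', hp'a⟩ hp')
      · have := p.2
        rw [Fin.le_def]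
        omega
    · rintro ⟨h1, h2⟩
      exact ⟨h1, fun p' hp' => Subtype.coe_le_coe.mp (h2 p'.1 hp')⟩
  have hrank := rank_eq_card_pivots A (fun p q q' h h' =>
    Subtype.ext (hR p.1 q.1 q'.1 ((key p q).mp h) ((key p q').mp h')))
  have hL : rankLL R a b = A.rank := rfl
  rw [hL, hrank]
  refine Finset.card_bij (fun q _ => q.1) ?_ ?_ ?_
  · rintro q hq
    obtain ⟨p, hp⟩ := (Finset.mem_filter.mp hq).2
    obtain ⟨p', hpp', hlow⟩ := exists_isLow R hp
    refine Finset.mem_filter.mpr ⟨Finset.mem_univ _, q.2, p', ?_, hlow⟩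
    have := p.2
    rw [Fin.le_def] at hpp'
    omega
  · intro q _ q' _ h
    exact Subtype.ext h
  · intro q hq
    obtain ⟨-, hqb, p, hpa, hlow⟩ := Finset.mem_filter.mp hq
    exact ⟨⟨q, hqb⟩, Finset.mem_filter.mpr ⟨Finset.mem_univ _, ⟨⟨p, hpa⟩, hlow.1⟩⟩, rfl⟩

/-- Rank of the lower-left blocks is unchanged by column reduction. -/
lemma rankLL_mul {N : ℕ} (D V : Matrix (Fin N) (Fin N) (ZMod 2))
    (hV : IsUnit V) (hVt : UpperTri V) (a b : ℕ) :
    rankLL D a b = rankLL (D * V) a b := by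
  classical
  set D' : Matrix {p : Fin N // a ≤ (p : ℕ) + 1} {q : Fin N // (q : ℕ) + 1 ≤ b} (ZMod 2) :=
    Matrix.of fun p q => D p.1 q.1 with hD'
  set V' : Matrix {q : Fin N // (q : ℕ) + 1 ≤ b} {q : Fin N // (q : ℕ) + 1 ≤ b} (ZMod 2) :=
    Matrix.of fun k q => V k.1 q.1 with hV'
  have hdiag : ∀ i : Fin N, V i i ≠ 0 := by
    have h1 : V.det = ∏ i, V i i :=
      Matrix.det_of_upperTriangular (fun i j hij => hVt i j hij)
    have h2 : V.det ≠ 0 := ((Matrix.isUnit_iff_isUnit_det V).mp hV).ne_zero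
    rw [h1] at h2
    intro i h
    exact h2 (Finset.prod_eq_zero (Finset.mem_univ i) h)
  have hdetV' : IsUnit V'.det := by
    have h1 : V'.det = ∏ q, V' q q :=
      Matrix.det_of_upperTriangular (fun p q hpq => hVt p.1 q.1 (Subtype.coe_lt_coe.mpr hpq))
    rw [isUnit_iff_ne_zero, h1]
    exact Finset.prod_ne_zero_iff.mpr fun q _ => hdiag q.1
  have hsub : (Matrix.of fun (p : {p : Fin N // a ≤ (p : ℕ) + 1})
      (q : {q : Fin N // (q : ℕ) + 1 ≤ b}) => (D * V) p.1 q.1) = D' * V' := by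
    ext p q
    simp only [Matrix.of_apply, Matrix.mul_apply, hD', hV']
    rw [← Finset.sum_subtype (Finset.univ.filter fun k : Fin N => (k : ℕ) + 1 ≤ b)
      (fun k => by simp) (fun k => D p.1 k * V k q.1)]
    refine (Finset.sum_filter_of_ne fun k _ hk => ?_).symm
    by_contra hkb
    have hq := q.2
    have : (q : Fin N) < k := by
      rcases q with ⟨q, hq2⟩
      exact Fin.lt_def.mpr (by omega)
    rw [hVt k q.1 this, mul_zero] at hk
    exact hk rfl
  have e1 : rankLL (D * V) a b = (D' * V').rank := by rw [rankLL, hsub]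
  have e2 : rankLL D a b = D'.rank := rfl
  have h1 : (D' * V').rank ≤ D'.rank := Matrix.rank_mul_le_left D' V'
  have h2 : D'.rank ≤ (D' * V').rank := by
    have hinv : D' = D' * V' * V'⁻¹ := by
      rw [Matrix.mul_assoc, Matrix.mul_nonsing_inv _ hdetV', Matrix.mul_one]
    calc D'.rank = (D' * V' * V'⁻¹).rank := by rw [← hinv]
      _ ≤ (D' * V').rank := Matrix.rank_mul_le_left _ _
  omega

/-- Pairing Lemma: `(i,j)` is a pivot pair of the reduced matrix `R = D * V` if and only if
`r_D(i,j) − r_D(i+1,j) + r_D(i+1,j−1) − r_D(i,j−1) = 1`, where `r_D(a,b)` is the rank of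
`D[≥ a, ≤ b]` (with `r_D(N+1,·) = 0` and `r_D(·,0) = 0` automatic, since the corresponding
index sets are empty). Here `i : Fin N` has 1-based index `i+1`, so `j−1` corresponds to
`(j : ℕ)` and `i+1` to `(i : ℕ)+2`. -/
theorem pairing_lemma {N : ℕ} (D V : Matrix (Fin N) (Fin N) (ZMod 2))
    (hV : IsUnit V) (hVt : UpperTri V) (hR : IsReducedMat (D * V)) :
    ∀ i j : Fin N,
      IsLow (D * V) i j ↔
        ((rankLL D ((i : ℕ) + 1) ((j : ℕ) + 1) : ℤ)
          - (rankLL D ((i : ℕ) + 2) ((j : ℕ) + 1) : ℤ)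
          + (rankLL D ((i : ℕ) + 2) (j : ℕ) : ℤ)
          - (rankLL D ((i : ℕ) + 1) (j : ℕ) : ℤ)) = 1 := by
  classical
  intro i j
  set R := D * V with hRdef
  -- pivot-count identity
  have hcard : ∀ b : ℕ, rankLL D ((i : ℕ) + 1) b = rankLL D ((i : ℕ) + 2) b
      + (Finset.univ.filter fun q : Fin N => (q : ℕ) + 1 ≤ b ∧ IsLow R i q).card := by
    intro b
    rw [rankLL_mul D V hV hVt ((i : ℕ) + 1) b, rankLL_mul D V hV hVt ((i : ℕ) + 2) b,
      rankLL_eq_card _ hR, rankLL_eq_card _ hR]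
    have hunion : (Finset.univ.filter fun q : Fin N =>
          (q : ℕ) + 1 ≤ b ∧ ∃ p : Fin N, (i : ℕ) + 1 ≤ (p : ℕ) + 1 ∧ IsLow R p q)
        = (Finset.univ.filter fun q : Fin N =>
          (q : ℕ) + 1 ≤ b ∧ ∃ p : Fin N, (i : ℕ) + 2 ≤ (p : ℕ) + 1 ∧ IsLow R p q)
        ∪ (Finset.univ.filter fun q : Fin N => (q : ℕ) + 1 ≤ b ∧ IsLow R i q) := by
      ext q
      simp only [Finset.mem_union, Finset.mem_filter, Finset.mem_univ, true_and]
      constructor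
      · rintro ⟨hqb, p, hip, hlow⟩
        rcases eq_or_lt_of_le (Fin.le_def.mpr (by omega : (i : ℕ) ≤ (p : ℕ))) with h | h
        · exact Or.inr ⟨hqb, h ▸ hlow⟩
        · exact Or.inl ⟨hqb, p, by rw [Fin.lt_def] at h; omega, hlow⟩
      · rintro (⟨hqb, p, hip, hlow⟩ | ⟨hqb, hlow⟩)
        · exact ⟨hqb, p, by omega, hlow⟩
        · exact ⟨hqb, i, le_refl _, hlow⟩
    have hdisj : Disjoint (Finset.univ.filter fun q : Fin N =>
          (q : ℕ) + 1 ≤ b ∧ ∃ p : Fin N, (i : ℕ) + 2 ≤ (p : ℕ) + 1 ∧ IsLow R p q)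
        (Finset.univ.filter fun q : Fin N => (q : ℕ) + 1 ≤ b ∧ IsLow R i q) := by
      rw [Finset.disjoint_left]
      rintro q hq1 hq2
      obtain ⟨-, -, p, hip, hlow⟩ := Finset.mem_filter.mp hq1
      obtain ⟨-, -, hlow'⟩ := Finset.mem_filter.mp hq2
      have := isLow_unique hlow hlow'
      subst this
      omega
    rw [hunion, Finset.card_union_of_disjoint hdisj]
  by_cases hlow : IsLow R i j
  · have hTeq : (Finset.univ.filter fun q : Fin N =>
        (q : ℕ) + 1 ≤ (j : ℕ) + 1 ∧ IsLow R i q)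
        = insert j (Finset.univ.filter fun q : Fin N => (q : ℕ) + 1 ≤ (j : ℕ) ∧ IsLow R i q) := by
      ext q
      simp only [Finset.mem_insert, Finset.mem_filter, Finset.mem_univ, true_and]
      constructor
      · rintro ⟨hqb, hq⟩
        rcases eq_or_ne q j with h | h
        · exact Or.inl h
        · have : (q : ℕ) ≠ (j : ℕ) := fun hc => h (Fin.val_injective hc)
          exact Or.inr ⟨by omega, hq⟩
      · rintro (rfl | ⟨hqb, hq⟩)
        · exact ⟨by omega, hlow⟩
        · exact ⟨by omega, hq⟩
    have hj : j ∉ (Finset.univ.filter fun q : Fin N =>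
        (q : ℕ) + 1 ≤ (j : ℕ) ∧ IsLow R i q) := by
      simp only [Finset.mem_filter, Finset.mem_univ, true_and, not_and]
      intro h
      omega
    have e3 := Finset.card_insert_of_notMem hj
    rw [← hTeq] at e3
    have e1 := hcard ((j : ℕ) + 1)
    have e2 := hcard (j : ℕ)
    rw [iff_true_intro hlow, true_iff]
    omega
  · have hTeq : (Finset.univ.filter fun q : Fin N =>
        (q : ℕ) + 1 ≤ (j : ℕ) + 1 ∧ IsLow R i q)
        = (Finset.univ.filter fun q : Fin N => (q : ℕ) + 1 ≤ (j : ℕ) ∧ IsLow R i q) := by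
      ext q
      simp only [Finset.mem_filter, Finset.mem_univ, true_and]
      constructor
      · rintro ⟨hqb, hq⟩
        rcases eq_or_ne q j with h | h
        · exact absurd (h ▸ hq) hlow
        · have : (q : ℕ) ≠ (j : ℕ) := fun hc => h (Fin.val_injective hc)
          exact ⟨by omega, hq⟩
      · rintro ⟨hqb, hq⟩
        exact ⟨by omega, hq⟩
    have e1 := hcard ((j : ℕ) + 1)
    have e2 := hcard (j : ℕ)
    rw [hTeq] at e1
    rw [iff_false_intro hlow, false_iff]
    omega
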